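/- Given a graph G on n vertices with adjacency matrix C, a positive integer j, and π in the probability simplex Δ ⊂ ℝⁿ, define B_π = [[I, -(I+C)π], [-πᵀ, 1/j]]. If det(B_π) > 0, then G contains an independent set of size at least j+1. -/

import Mathlib

open Matrix BigOperators

/-- `s` is an independent set of `G`: pairwise non-adjacent vertices. -/
def IsIndepSet {n : ℕ} (G : SimpleGraph (Fin n)) (s : Finset (Fin n)) : Prop :=
  ∀ i ∈ s, ∀ j ∈ s, ¬ G.Adj i j

section Aux

variable {n : ℕ} (G : SimpleGraph (Fin n)) [DecidableRel G.Adj]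

private noncomputable def Mmat : Matrix (Fin n) (Fin n) ℝ := 1 + G.adjMatrix ℝ

private lemma Mmat_nonneg (a b : Fin n) : (0:ℝ) ≤ Mmat G a b := by
  simp only [Mmat, Matrix.add_apply, Matrix.one_apply, SimpleGraph.adjMatrix_apply]
  split_ifs <;> norm_num

private lemma Mmat_diag (a : Fin n) : Mmat G a a = 1 := by
  simp [Mmat, Matrix.one_apply]

private lemma Mmat_adj {a b : Fin n} (h : G.Adj a b) : Mmat G a b = 1 := by
  simp [Mmat, Matrix.one_apply, h, G.ne_of_adj h]

private lemma Mmat_symm (a b : Fin n) : Mmat G a b = Mmat G b a := by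
  rcases eq_or_ne a b with h | h
  · subst h; rfl
  · simp [Mmat, Matrix.one_apply, h, h.symm, SimpleGraph.adj_comm]

private lemma dot_symm (x y : Fin n → ℝ) :
    x ⬝ᵥ (Mmat G *ᵥ y) = y ⬝ᵥ (Mmat G *ᵥ x) := by
  simp only [dotProduct, Matrix.mulVec, Finset.mul_sum]
  rw [Finset.sum_comm]
  refine Finset.sum_congr rfl fun a _ => Finset.sum_congr rfl fun b _ => ?_
  rw [Mmat_symm G b a]; ring

/-- The key lemma: for any `π` in the simplex there is a nonempty independent set `s`
with `1/|s| ≤ πᵀ(I+C)π`.  Induction on the size of the support of `π`. -/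
private lemma key : ∀ N : ℕ, ∀ π : Fin n → ℝ, π ∈ stdSimplex ℝ (Fin n) →
    (Finset.univ.filter fun i => π i ≠ 0).card ≤ N →
    ∃ s : Finset (Fin n), IsIndepSet G s ∧ 0 < s.card ∧
      (1:ℝ) / s.card ≤ π ⬝ᵥ (Mmat G *ᵥ π) := by
  intro N
  induction N with
  | zero =>
    intro π hπ hcard
    exfalso
    have hall : ∀ i, π i = 0 := by
      intro i
      by_contra h
      have : i ∈ Finset.univ.filter fun i => π i ≠ 0 := by simp [h]
      have := Finset.card_pos.mpr ⟨i, this⟩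
      omega
    have : (1:ℝ) = 0 := by
      rw [← hπ.2]
      simp [hall]
    norm_num at this
  | succ N ih =>
    intro π hπ hcard
    by_cases hadj : ∃ a, π a ≠ 0 ∧ ∃ b, π b ≠ 0 ∧ G.Adj a b
    · -- shift weight between two adjacent supported vertices
      obtain ⟨a, ha, b, hb, hab⟩ := hadj
      -- WLOG the linear coefficient is ≤ 0 in direction e_a - e_b
      have main : ∀ i j : Fin n, π i ≠ 0 → π j ≠ 0 → G.Adj i j →
          (Pi.single i 1 - Pi.single j 1) ⬝ᵥ (Mmat G *ᵥ π) ≤ 0 →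
          ∃ s : Finset (Fin n), IsIndepSet G s ∧ 0 < s.card ∧
            (1:ℝ) / s.card ≤ π ⬝ᵥ (Mmat G *ᵥ π) := by
        intro i j hi hj hij hc
        have hij' : i ≠ j := G.ne_of_adj hij
        set d : Fin n → ℝ := Pi.single i 1 - Pi.single j 1 with hd
        set π' : Fin n → ℝ := π + π j • d with hπ'
        have hπj : 0 < π j := lt_of_le_of_ne (hπ.1 j) (Ne.symm hj)
        have hdMd : d ⬝ᵥ (Mmat G *ᵥ d) = 0 := by
          simp only [hd, Matrix.mulVec_sub, sub_dotProduct, Matrix.mulVec_single_one, Matrix.col_apply,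
            single_dotProduct, one_mul, mul_one]
          have h1 : Mmat G i i = 1 := Mmat_diag G i
          have h2 : Mmat G j j = 1 := Mmat_diag G j
          have h3 : Mmat G i j = 1 := Mmat_adj G hij
          have h4 : Mmat G j i = 1 := Mmat_adj G hij.symm
          simp only [Pi.sub_apply, Matrix.col_apply]
          rw [h1, h2, h3, h4]; ring
        -- value of Q at π'
        have hQ : π' ⬝ᵥ (Mmat G *ᵥ π') =
            π ⬝ᵥ (Mmat G *ᵥ π) + 2 * π j * (d ⬝ᵥ (Mmat G *ᵥ π)) := by
          have hsym : π ⬝ᵥ (Mmat G *ᵥ d) = d ⬝ᵥ (Mmat G *ᵥ π) := dot_symm G π d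
          simp only [hπ', Matrix.mulVec_add, Matrix.mulVec_smul, add_dotProduct,
            dotProduct_add, smul_dotProduct, dotProduct_smul,
            smul_eq_mul]
          rw [hsym, hdMd]; ring
        have hQle : π' ⬝ᵥ (Mmat G *ᵥ π') ≤ π ⬝ᵥ (Mmat G *ᵥ π) := by
          rw [hQ]
          nlinarith [hπj, hc]
        -- π' is in the simplex
        have hval : ∀ k, π' k = π k + π j *
            ((if k = i then (1:ℝ) else 0) - (if k = j then 1 else 0)) := by
          intro k
          simp [hπ', hd, Pi.single_apply]
        have hπ'j : π' j = 0 := by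
          rw [hval, if_neg (Ne.symm hij'), if_pos rfl]; ring
        have hπ'mem : π' ∈ stdSimplex ℝ (Fin n) := by
          constructor
          · intro k
            rw [hval]
            by_cases hk : k = i
            · rw [if_pos hk, if_neg (hk ▸ hij')]
              have := hπ.1 k
              nlinarith [hπj]
            · rw [if_neg hk]
              by_cases hk' : k = j
              · subst hk'
                rw [if_pos rfl]
                nlinarith [hπj]
              · rw [if_neg hk']
                have := hπ.1 k
                nlinarith
          · have : ∑ k, d k = 0 := by
              simp [hd, Finset.sum_sub_distrib, Finset.sum_pi_single]
            calc ∑ k, π' k = ∑ k, π k + π j * ∑ k, d k := by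
                  simp [hπ', Finset.sum_add_distrib, Finset.mul_sum, smul_eq_mul]
              _ = 1 := by rw [this, hπ.2]; ring
        -- support shrinks
        have hsupp : (Finset.univ.filter fun k => π' k ≠ 0) ⊆
            (Finset.univ.filter fun k => π k ≠ 0).erase j := by
          intro k hk
          simp only [Finset.mem_filter, Finset.mem_univ, true_and] at hk
          rw [Finset.mem_erase]
          constructor
          · intro h; subst h; exact hk hπ'j
          · simp only [Finset.mem_filter, Finset.mem_univ, true_and]
            by_cases hki : k = i
            · subst hki; exact hi
            · intro h0
              apply hk
              have hkj : k ≠ j := fun h => (h ▸ hk) hπ'j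
              rw [hval, if_neg hki, if_neg hkj, h0]
              ring
        have hjsupp : j ∈ Finset.univ.filter fun k => π k ≠ 0 := by simp [hj]
        have hcard' : (Finset.univ.filter fun k => π' k ≠ 0).card ≤ N := by
          have h1 := Finset.card_le_card hsupp
          have h2 := Finset.card_erase_of_mem hjsupp
          have h3 := Finset.card_pos.mpr ⟨j, hjsupp⟩
          omega
        obtain ⟨s, hs1, hs2, hs3⟩ := ih π' hπ'mem hcard'
        exact ⟨s, hs1, hs2, le_trans hs3 hQle⟩
      set c := (Pi.single a 1 - Pi.single b 1) ⬝ᵥ (Mmat G *ᵥ π) with hcdef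
      by_cases hc : c ≤ 0
      · exact main a b ha hb hab hc
      · apply main b a hb ha hab.symm
        have : (Pi.single b 1 - Pi.single a 1) ⬝ᵥ (Mmat G *ᵥ π) = -c := by
          rw [hcdef]
          simp only [sub_dotProduct]
          ring
        rw [this]
        linarith
    · -- the support is an independent set
      push_neg at hadj
      set s := Finset.univ.filter fun i => π i ≠ 0 with hs
      have hindep : IsIndepSet G s := by
        intro x hx y hy
        simp only [hs, Finset.mem_filter, Finset.mem_univ, true_and] at hx hy
        exact hadj x hx y hy
      have hsum1 : ∑ i ∈ s, π i = 1 := by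
        rw [hs, Finset.sum_filter_ne_zero, hπ.2]
      have hne : 0 < s.card := by
        rcases Finset.eq_empty_or_nonempty s with h | h
        · rw [h] at hsum1; simp at hsum1
        · exact Finset.card_pos.mpr h
      -- Q π ≥ ∑_{i ∈ s} (π i)^2
      have hQge : ∑ i ∈ s, π i ^ 2 ≤ π ⬝ᵥ (Mmat G *ᵥ π) := by
        have hterm : ∀ i : Fin n, π i ^ 2 ≤ π i * (Mmat G *ᵥ π) i := by
          intro i
          have : π i * π i ≤ π i * (Mmat G *ᵥ π) i := by
            apply mul_le_mul_of_nonneg_left _ (hπ.1 i)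
            calc π i = Mmat G i i * π i := by rw [Mmat_diag]; ring
              _ ≤ ∑ k, Mmat G i k * π k := by
                  apply Finset.single_le_sum (f := fun k => Mmat G i k * π k)
                    (fun k _ => mul_nonneg (Mmat_nonneg G i k) (hπ.1 k))
                    (Finset.mem_univ i)
              _ = (Mmat G *ᵥ π) i := rfl
          nlinarith [this]
        calc ∑ i ∈ s, π i ^ 2 ≤ ∑ i ∈ s, π i * (Mmat G *ᵥ π) i :=
              Finset.sum_le_sum fun i _ => hterm i
          _ ≤ ∑ i, π i * (Mmat G *ᵥ π) i := by
              apply Finset.sum_le_sum_of_subset_of_nonneg (Finset.subset_univ s)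
              intro i _ _
              calc (0:ℝ) ≤ π i ^ 2 := sq_nonneg _
                _ ≤ _ := hterm i
          _ = π ⬝ᵥ (Mmat G *ᵥ π) := rfl
      refine ⟨s, hindep, hne, ?_⟩
      have hcs : (1:ℝ) ≤ s.card * ∑ i ∈ s, π i ^ 2 := by
        have := sq_sum_le_card_mul_sum_sq (s := s) (f := π)
        rw [hsum1] at this
        push_cast at this ⊢
        nlinarith [this]
      have hcardpos : (0:ℝ) < s.card := by exact_mod_cast hne
      rw [div_le_iff₀ hcardpos]
      nlinarith [hQge, hcs, hcardpos]

end Aux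

/-- With `C` the adjacency matrix of a graph `G` on `n` vertices,
`j` a positive integer, `π` in the probability simplex, and
`B_π = [[I, -(I+C)π], [-πᵀ, 1/j]]`: if `det B_π > 0` then `G` contains an independent
set of size at least `j + 1`. -/
theorem det_pos_imp_indep (n : ℕ) (G : SimpleGraph (Fin n)) [DecidableRel G.Adj]
    (j : ℕ) (hj : 0 < j) (π : Fin n → ℝ) (hπ : π ∈ stdSimplex ℝ (Fin n))
    (hdet : 0 < (Matrix.fromBlocks (1 : Matrix (Fin n) (Fin n) ℝ)
        (Matrix.of fun i (_ : Fin 1) => -(((1 + G.adjMatrix ℝ) *ᵥ π) i))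
        (Matrix.of fun (_ : Fin 1) i => -π i)
        (Matrix.of fun (_ : Fin 1) (_ : Fin 1) => 1 / (j : ℝ))).det) :
    ∃ s : Finset (Fin n), IsIndepSet G s ∧ j + 1 ≤ s.card := by
  rw [Matrix.det_fromBlocks_one₁₁] at hdet
  rw [Matrix.det_fin_one] at hdet
  have hQ : π ⬝ᵥ ((1 + G.adjMatrix ℝ) *ᵥ π) < 1 / (j : ℝ) := by
    simp only [Matrix.sub_apply, Matrix.mul_apply, Matrix.of_apply, neg_mul_neg] at hdet
    have : π ⬝ᵥ ((1 + G.adjMatrix ℝ) *ᵥ π) = ∑ i, π i * ((1 + G.adjMatrix ℝ) *ᵥ π) i := rfl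
    rw [this]
    linarith
  obtain ⟨s, hs1, hs2, hs3⟩ := key G (Finset.univ.filter fun i => π i ≠ 0).card π hπ le_rfl
  refine ⟨s, hs1, ?_⟩
  have hjpos : (0:ℝ) < j := by exact_mod_cast hj
  have hcardpos : (0:ℝ) < s.card := by exact_mod_cast hs2
  have hlt : (1:ℝ)/s.card < 1/j := lt_of_le_of_lt hs3 (by
    have : Mmat G = 1 + G.adjMatrix ℝ := rfl
    rw [this]; exact hQ)
  rw [div_lt_div_iff₀ hcardpos hjpos] at hlt
  have : j < s.card := by
    have : (j:ℝ) < s.card := by linarith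
    exact_mod_cast this
  omega
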